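/- arXiv:1403.6641 — 4 statements merged into one kernel-verified Lean document; each statement's English description precedes it below -/
import Mathlib

section
/- Let H : ℝ × (Fin 2 → ℝ) → ℝ be continuously differentiable and define G(θ, φ) := H(θ, R(θ).mulVec φ). Then for all θ ∈ ℝ and φ ∈ (Fin 2 → ℝ), the partial derivative of G with respect to its first argument satisfies ∂G/∂θ (θ, φ) = ∂H/∂θ (θ, R(θ).mulVec φ) − ⟨φ, J.mulVec (∇₂G(θ, φ))⟩, where ∇₂G(θ, φ) denotes the gradient of G with respect to its second argument (for the Euclidean inner product ⟨·,·⟩). -/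
open scoped RealInnerProductSpace

/-- The 2×2 rotation matrix of angle `θ`. -/
noncomputable def R (θ : ℝ) : Matrix (Fin 2) (Fin 2) ℝ :=
  !![Real.cos θ, -Real.sin θ; Real.sin θ, Real.cos θ]

/-- The 2×2 matrix `J` (rotation by `π/2`). -/
def J : Matrix (Fin 2) (Fin 2) ℝ := !![0, -1; 1, 0]

/-- Angular partial derivative of the Hamiltonian in the dq frame: with
`G (θ, φ) = H (θ, R θ • φ)`, one has
`∂G/∂θ = ∂H/∂θ - ⟪φ, J (∇₂ G)⟫`. -/
theorem dq_frame_angular_derivative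
    (H : ℝ × EuclideanSpace ℝ (Fin 2) → ℝ) (hH : ContDiff ℝ 1 H) :
    ∀ (θ : ℝ) (φ : EuclideanSpace ℝ (Fin 2)),
      deriv (fun θ' => H (θ', WithLp.toLp 2 ((R θ').mulVec φ))) θ
        = deriv (fun θ' => H (θ', WithLp.toLp 2 ((R θ).mulVec φ))) θ
          - @inner ℝ (EuclideanSpace ℝ (Fin 2)) _ φ
              (WithLp.toLp 2 (J.mulVec
                ((gradient (fun ψ : EuclideanSpace ℝ (Fin 2) => H (θ, WithLp.toLp 2 ((R θ).mulVec ψ))) φ :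
                    EuclideanSpace ℝ (Fin 2)) : Fin 2 → ℝ))) := by
  intro θ φ
  classical
  have hd : Differentiable ℝ H := hH.differentiable one_ne_zero
  set v : EuclideanSpace ℝ (Fin 2) := WithLp.toLp 2 ((R θ).mulVec φ) with hv
  set f' : ℝ × EuclideanSpace ℝ (Fin 2) →L[ℝ] ℝ := fderiv ℝ H (θ, v) with hf'
  have hHf : HasFDerivAt H f' (θ, v) := (hd _).hasFDerivAt
  -- derivative of the frame curve, in the plain pi type
  have hw0 : HasDerivAt (fun θ' : ℝ => (R θ').mulVec φ)
      (J.mulVec ((R θ).mulVec φ)) θ := by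
    rw [hasDerivAt_pi]
    intro i
    fin_cases i
    · have h : HasDerivAt (fun θ' : ℝ => Real.cos θ' * φ 0 + -Real.sin θ' * φ 1)
          (-Real.sin θ * φ 0 + -Real.cos θ * φ 1) θ :=
        ((Real.hasDerivAt_cos θ).mul_const (φ 0)).add
          (((Real.hasDerivAt_sin θ).neg).mul_const (φ 1))
      convert h using 2 <;>
        first | (simp [R, J, Matrix.mulVec, dotProduct, Fin.sum_univ_two] <;> ring) | rfl
    · have h : HasDerivAt (fun θ' : ℝ => Real.sin θ' * φ 0 + Real.cos θ' * φ 1)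
          (Real.cos θ * φ 0 + -Real.sin θ * φ 1) θ :=
        ((Real.hasDerivAt_sin θ).mul_const (φ 0)).add
          ((Real.hasDerivAt_cos θ).mul_const (φ 1))
      convert h using 2 <;>
        first | (simp [R, J, Matrix.mulVec, dotProduct, Fin.sum_univ_two] <;> ring) | rfl
  -- transfer to EuclideanSpace
  set u : EuclideanSpace ℝ (Fin 2) :=
    WithLp.toLp 2 (J.mulVec ((R θ).mulVec φ)) with hu
  have hw : HasDerivAt
      (fun θ' : ℝ => WithLp.toLp 2 ((R θ').mulVec φ)) u θ := by
    exact ((PiLp.continuousLinearEquiv 2 ℝ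
      (fun _ : Fin 2 => ℝ)).symm).hasFDerivAt.comp_hasDerivAt θ hw0
  have hc : HasDerivAt
      (fun θ' : ℝ => ((θ', WithLp.toLp 2 ((R θ').mulVec φ)) :
        ℝ × EuclideanSpace ℝ (Fin 2))) (1, u) θ := (hasDerivAt_id θ).prodMk hw
  have h1 : deriv (fun θ' => H (θ', WithLp.toLp 2 ((R θ').mulVec φ))) θ = f' (1, u) :=
    (hHf.comp_hasDerivAt θ hc).deriv
  have h2 : deriv (fun θ' => H (θ', WithLp.toLp 2 ((R θ).mulVec φ))) θ = f' (1, 0) :=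
    (hHf.comp_hasDerivAt θ ((hasDerivAt_id θ).prodMk (hasDerivAt_const θ v))).deriv
  -- the linear frame map
  set L : EuclideanSpace ℝ (Fin 2) →L[ℝ] EuclideanSpace ℝ (Fin 2) :=
    LinearMap.toContinuousLinearMap (Matrix.toEuclideanLin (R θ)) with hL
  have hLapp : ∀ (y : EuclideanSpace ℝ (Fin 2)) (j : Fin 2),
      L y j = ((R θ).mulVec (y : Fin 2 → ℝ)) j := fun y j => rfl
  set g : EuclideanSpace ℝ (Fin 2) → ℝ :=
    fun ψ : EuclideanSpace ℝ (Fin 2) => H (θ, WithLp.toLp 2 ((R θ).mulVec ψ)) with hg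
  have hgf : HasFDerivAt g (f'.comp (((0 : EuclideanSpace ℝ (Fin 2) →L[ℝ] ℝ)).prod L)) φ := by
    have hk : HasFDerivAt (fun ψ : EuclideanSpace ℝ (Fin 2) =>
        ((θ, L ψ) : ℝ × EuclideanSpace ℝ (Fin 2)))
        (((0 : EuclideanSpace ℝ (Fin 2) →L[ℝ] ℝ)).prod L) φ :=
      (hasFDerivAt_const θ φ).prodMk L.hasFDerivAt
    exact hHf.comp φ hk
  have hgrad : ∀ y : EuclideanSpace ℝ (Fin 2), ⟪gradient g φ, y⟫ = f' (0, L y) := by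
    intro y
    rw [gradient, InnerProductSpace.toDual_symm_apply, hgf.fderiv]
    simp
  -- components of the gradient
  have hGi : ∀ i : Fin 2, (gradient g φ) i = f' (0, L (EuclideanSpace.single i (1 : ℝ))) := by
    intro i
    rw [← hgrad (EuclideanSpace.single i 1), EuclideanSpace.inner_single_right]
    simp
  set a0 : ℝ := f' (0, EuclideanSpace.single 0 (1 : ℝ)) with ha0
  set a1 : ℝ := f' (0, EuclideanSpace.single 1 (1 : ℝ)) with ha1
  have hdecomp : ∀ (t : ℝ) (x : EuclideanSpace ℝ (Fin 2)),
      f' (t, x) = t * f' (1, 0) + x 0 * a0 + x 1 * a1 := by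
    intro t x
    have hx : ((t, x) : ℝ × EuclideanSpace ℝ (Fin 2))
        = t • ((1 : ℝ), (0 : EuclideanSpace ℝ (Fin 2)))
          + x 0 • ((0 : ℝ), EuclideanSpace.single 0 (1 : ℝ))
          + x 1 • ((0 : ℝ), EuclideanSpace.single 1 (1 : ℝ)) := by
      refine Prod.ext ?_ ?_
      · simp
      · ext i
        fin_cases i <;>
          simp [EuclideanSpace.single_apply, PiLp.add_apply, PiLp.smul_apply]
    have h' : f' (t, x) = t • f' (1, 0) + x 0 • f' (0, EuclideanSpace.single 0 (1 : ℝ))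
        + x 1 • f' (0, EuclideanSpace.single 1 (1 : ℝ)) := by
      rw [hx, map_add, map_add, map_smul, map_smul, map_smul]
    simpa [smul_eq_mul] using h'
  have hL0 : ∀ i j : Fin 2, L (EuclideanSpace.single i (1 : ℝ)) j = (R θ) j i := by
    intro i j
    rw [hLapp]
    fin_cases i <;> fin_cases j <;>
      simp [Matrix.mulVec, dotProduct, Fin.sum_univ_two, EuclideanSpace.single_apply]
  have hG : ∀ i : Fin 2, (gradient g φ) i = (R θ) 0 i * a0 + (R θ) 1 i * a1 := by
    intro i
    rw [hGi i, hdecomp]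
    simp [hL0]
  rw [h1, h2, hdecomp 1 u]
  simp only [PiLp.inner_apply, RCLike.inner_apply, conj_trivial, Fin.sum_univ_two, hu,
    PiLp.toLp_apply, Matrix.mulVec, dotProduct, hG, J, R, one_mul]
  norm_num
  ring
end

section
/- Let H : ℝ × (Fin 3 → ℝ) → ℝ satisfy the phase-permutation symmetry H(θ, φ) = H(θ + 2π/3, P.mulVec φ) for all θ ∈ ℝ and φ ∈ (Fin 3 → ℝ). Define G(θ, φ) := H(θ, Qᵀ.mulVec (R₃(θ).mulVec φ)). Then G(θ + 2π/3, φ) = G(θ, φ) for all θ and φ, i.e. the Hamiltonian expressed in the dq0 frame is 2π/3-periodic in θ. -/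
open Real

/-- The Clarke transformation matrix. -/
noncomputable def Qc : Matrix (Fin 3) (Fin 3) ℝ :=
  Real.sqrt (2 / 3) •
    !![1, -(1 / 2 : ℝ), -(1 / 2);
       0, Real.sqrt 3 / 2, -(Real.sqrt 3 / 2);
       1 / Real.sqrt 2, 1 / Real.sqrt 2, 1 / Real.sqrt 2]

/-- The cyclic permutation matrix sending `(x₁, x₂, x₃)` to `(x₃, x₁, x₂)`. -/
def Pc : Matrix (Fin 3) (Fin 3) ℝ := !![0, 0, 1; 1, 0, 0; 0, 1, 0]

/-- Rotation of the first two coordinates by `θ`, fixing the third. -/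
noncomputable def R₃ (θ : ℝ) : Matrix (Fin 3) (Fin 3) ℝ :=
  !![Real.cos θ, -Real.sin θ, 0; Real.sin θ, Real.cos θ, 0; 0, 0, 1]

lemma key (θ : ℝ) (φ : Fin 3 → ℝ) :
    Pc.mulVec (Qc.transpose.mulVec ((R₃ θ).mulVec φ))
      = Qc.transpose.mulVec ((R₃ (θ + 2 * π / 3)).mulVec φ) := by
  have hc : Real.cos (2 * π / 3) = -(1/2) := by
    rw [show (2*π/3 : ℝ) = π - π/3 by ring, Real.cos_pi_sub, Real.cos_pi_div_three]
  have hs : Real.sin (2 * π / 3) = Real.sqrt 3 / 2 := by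
    rw [show (2*π/3 : ℝ) = π - π/3 by ring, Real.sin_pi_sub, Real.sin_pi_div_three]
  have h3 : Real.sqrt 3 * Real.sqrt 3 = 3 := Real.mul_self_sqrt (by norm_num)
  funext i
  fin_cases i <;>
    simp [Pc, Qc, R₃, Matrix.mulVec, dotProduct, Fin.sum_univ_three,
      Real.cos_add, Real.sin_add, hc, hs] <;>
    (ring_nf; try (simp only [pow_two, h3]; ring))

/-- Phase-permutation symmetry in the dq0 frame: if
`H (θ, φ) = H (θ + 2π/3, P φ)` for all `θ, φ`, then the dq0-frame Hamiltonian
`G (θ, φ) = H (θ, Qᵀ (R₃ θ) φ)` is `2π/3`-periodic in `θ`. -/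
theorem dq0_phase_permutation_periodicity
    (H : ℝ × (Fin 3 → ℝ) → ℝ)
    (hsym : ∀ (θ : ℝ) (φ : Fin 3 → ℝ), H (θ, φ) = H (θ + 2 * π / 3, Pc.mulVec φ)) :
    ∀ (θ : ℝ) (φ : Fin 3 → ℝ),
      H (θ + 2 * π / 3, Qc.transpose.mulVec ((R₃ (θ + 2 * π / 3)).mulVec φ))
        = H (θ, Qc.transpose.mulVec ((R₃ θ).mulVec φ)) := by
  intro θ φ
  rw [hsym θ (Qc.transpose.mulVec ((R₃ θ).mulVec φ)), key]
end

section
/- Let H : ℝ × (Fin 3 → ℝ) → ℝ satisfy the central symmetry H(θ, φ) = H(θ + π, −φ) for all θ ∈ ℝ and φ ∈ (Fin 3 → ℝ). Define G(θ, φ) := H(θ, Qᵀ.mulVec (R₃(θ).mulVec φ)). Then for all θ and all φ = (φ₀, φ₁, φ₂), G(θ + π, φ) = G(θ, (φ₀, φ₁, −φ₂)); i.e. in the dq0 frame the Hamiltonian satisfies H^{dq0}(θ, φ^d, φ^q, φ^0) = H^{dq0}(θ + π, φ^d, φ^q, −φ^0). -/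
open Real

/-- Central symmetry in the dq0 frame: if `H (θ, φ) = H (θ + π, -φ)` for all
`θ, φ`, then the dq0-frame Hamiltonian `G (θ, φ) = H (θ, Qᵀ (R₃ θ) φ)`
satisfies `G (θ + π, φ) = G (θ, (φ₀, φ₁, -φ₂))`. -/
theorem dq0_central_symmetry
    (H : ℝ × (Fin 3 → ℝ) → ℝ)
    (hsym : ∀ (θ : ℝ) (φ : Fin 3 → ℝ), H (θ, φ) = H (θ + π, -φ)) :
    ∀ (θ : ℝ) (φ : Fin 3 → ℝ),
      H (θ + π, Qc.transpose.mulVec ((R₃ (θ + π)).mulVec φ))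
        = H (θ, Qc.transpose.mulVec ((R₃ θ).mulVec ![φ 0, φ 1, -φ 2])) := by
  intro θ φ
  have h1 : (R₃ (θ + π)).mulVec φ = -((R₃ θ).mulVec ![φ 0, φ 1, -φ 2]) := by
    funext i
    fin_cases i <;>
      simp [R₃, Matrix.mulVec, dotProduct, Fin.sum_univ_three,
        Real.cos_add_pi, Real.sin_add_pi] <;> ring
  rw [h1, Matrix.mulVec_neg, ← hsym]
end

section
/- Let H : ℝ × ℝ × (Fin 3 → ℝ) → ℝ satisfy the orientation symmetry H(θ, ρ, φ) = H(−θ, −ρ, O.mulVec φ) for all θ, ρ ∈ ℝ and φ ∈ (Fin 3 → ℝ). Define G(θ, ρ, φ) := H(θ, ρ, Qᵀ.mulVec (R₃(θ).mulVec φ)). Then for all θ, ρ and all φ = (φ₀, φ₁, φ₂), G(θ, ρ, φ) = G(−θ, −ρ, (φ₀, −φ₁, φ₂)); i.e. in the dq0 frame the Hamiltonian satisfies H^{dq0}(θ, ρ, φ^d, φ^q, φ^0) = H^{dq0}(−θ, −ρ, φ^d, −φ^q, φ^0). -/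
open Real

/-- The permutation matrix swapping the second and third coordinates. -/
def Oc : Matrix (Fin 3) (Fin 3) ℝ := !![1, 0, 0; 0, 0, 1; 0, 1, 0]

/-- Orientation symmetry in the dq0 frame: if `H (θ, ρ, φ) = H (-θ, -ρ, O φ)`
for all `θ, ρ, φ`, then the dq0-frame Hamiltonian
`G (θ, ρ, φ) = H (θ, ρ, Qᵀ (R₃ θ) φ)` satisfies
`G (θ, ρ, φ) = G (-θ, -ρ, (φ₀, -φ₁, φ₂))`. -/
theorem dq0_orientation_symmetry
    (H : ℝ × ℝ × (Fin 3 → ℝ) → ℝ)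
    (hsym : ∀ (θ ρ : ℝ) (φ : Fin 3 → ℝ), H (θ, ρ, φ) = H (-θ, -ρ, Oc.mulVec φ)) :
    ∀ (θ ρ : ℝ) (φ : Fin 3 → ℝ),
      H (θ, ρ, Qc.transpose.mulVec ((R₃ θ).mulVec φ))
        = H (-θ, -ρ, Qc.transpose.mulVec ((R₃ (-θ)).mulVec ![φ 0, -φ 1, φ 2])) := by
  intro θ ρ φ
  rw [hsym θ ρ _]
  congr 3
  funext i
  fin_cases i <;>
    simp [Oc, Qc, R₃, Matrix.mulVec, dotProduct, Fin.sum_univ_three,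
      Real.cos_neg, Real.sin_neg, Matrix.transpose] <;> ring
end
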